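/- arXiv:1312.7791 — 2 statements merged into one kernel-verified Lean document; each statement's English description precedes it below -/
import Mathlib

section
/- Let g(x) = e^{−π|x|^2} be the Gaussian window and, for 0 < τ ≤ 1, let g_τ(x) = g(x/τ). Then there is a constant C independent of τ such that ‖V_g g_τ‖_{L^1(R^{2d})} ≤ C; moreover, for any submultiplicative even weight v of polynomial growth, ‖ v(τ·) V_g g_τ ‖_{L^1(R^{2d})} ≤ C uniformly in 0 < τ ≤ 1. -/
open MeasureTheory Complex

noncomputable section

/-- Time-frequency shift `π(z) = T_x M_ω`. -/
def tfshift {d : ℕ} (z : (Fin d → ℝ) × (Fin d → ℝ)) (f : (Fin d → ℝ) → ℂ)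
    (y : Fin d → ℝ) : ℂ :=
  Complex.exp (Complex.I * ((∑ i, z.2 i * (y - z.1) i : ℝ) : ℂ)) * f (y - z.1)

/-- Short-time Fourier transform `V_g f(z) = ⟨f, π(z)g⟩`. -/
def stft {d : ℕ} (g f : (Fin d → ℝ) → ℂ) (z : (Fin d → ℝ) × (Fin d → ℝ)) : ℂ :=
  ∫ y, f y * starRingEnd ℂ (tfshift z g y)

/-- The Gaussian window `g(x) = e^{-π|x|²}` on `ℝ^d`. -/
def gaussWin (d : ℕ) (x : Fin d → ℝ) : ℂ :=
  Complex.exp (-(Real.pi : ℂ) * ((∑ i, (x i) ^ 2 : ℝ) : ℂ))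

section Aux

open Set

set_option maxHeartbeats 1000000

lemma oneDim (τ x ω : ℝ) (hτ0 : 0 < τ) (hτ1 : τ ≤ 1) :
    ‖∫ t : ℝ, cexp (((-(Real.pi * (τ⁻¹^2+1)) : ℝ) : ℂ) * t^2
        + (((2*Real.pi*x : ℝ) : ℂ) - I*(ω:ℝ)) * t + (I*(ω:ℝ)*(x:ℝ) - (Real.pi:ℂ)*(x:ℝ)^2))‖
      ≤ τ * Real.exp (-(Real.pi/2) * x^2) * Real.exp (-(τ^2/(8*Real.pi)) * ω^2) := by
  have hπ := Real.pi_pos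
  set A : ℝ := τ⁻¹^2 + 1 with hA
  have hA0 : 0 < A := by positivity
  have hinv : τ⁻¹^2 * τ^2 = 1 := by field_simp
  have hτsq : τ^2 ≤ 1 := by nlinarith
  have hA2 : 2 ≤ A := by
    have h1 : τ⁻¹^2 * τ^2 ≤ τ⁻¹^2 * 1 := mul_le_mul_of_nonneg_left hτsq (sq_nonneg _)
    rw [hinv, mul_one] at h1
    rw [hA]; linarith
  have hAt : A * τ^2 = 1 + τ^2 := by rw [hA]; field_simp
  have hAτ : A * τ^2 ≤ 2 := by rw [hAt]; linarith
  have hb : (((-(Real.pi * A) : ℝ) : ℂ)).re < 0 := by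
    simp only [Complex.ofReal_re]; nlinarith
  rw [integral_cexp_quadratic hb, norm_mul]
  have hfact1 : ‖((Real.pi : ℂ) / -(((-(Real.pi * A) : ℝ) : ℂ))) ^ (1/2 : ℂ)‖ ≤ τ := by
    have h1 : ((Real.pi : ℂ) / -(((-(Real.pi * A) : ℝ) : ℂ))) = ((Real.pi / (Real.pi * A) : ℝ) : ℂ) := by
      push_cast; ring
    rw [h1]
    have h2 : (0:ℝ) < Real.pi / (Real.pi * A) := by positivity
    rw [Complex.norm_cpow_eq_rpow_re_of_pos h2]
    have h3 : ((1/2 : ℂ)).re = (1/2 : ℝ) := by norm_num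
    rw [h3, ← Real.sqrt_eq_rpow]
    have h4 : Real.pi / (Real.pi * A) ≤ τ^2 := by
      rw [div_le_iff₀ (by positivity)]
      have h5 : τ^2 * (Real.pi * A) = Real.pi * (A * τ^2) := by ring
      rw [h5, hAt]
      nlinarith
    calc Real.sqrt (Real.pi / (Real.pi * A)) ≤ Real.sqrt (τ^2) := Real.sqrt_le_sqrt h4
      _ = τ := by rw [Real.sqrt_sq hτ0.le]
  have hre : ((I*(ω:ℝ)*(x:ℝ) - (Real.pi:ℂ)*(x:ℝ)^2)
      - ((((2*Real.pi*x : ℝ) : ℂ) - I*(ω:ℝ))^2 / (4 * (((-(Real.pi * A) : ℝ) : ℂ))))).re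
      = -Real.pi*x^2 + (4*Real.pi^2*x^2 - ω^2)/(4*(Real.pi*A)) := by
    have hbne : (((-(Real.pi * A) : ℝ) : ℂ)) ≠ 0 := by
      simp only [ne_eq, Complex.ofReal_eq_zero]
      nlinarith
    have hw : ((I*(ω:ℝ)*(x:ℝ) - (Real.pi:ℂ)*(x:ℝ)^2)
        - ((((2*Real.pi*x : ℝ) : ℂ) - I*(ω:ℝ))^2 / (4 * (((-(Real.pi * A) : ℝ) : ℂ)))))
        = ((-Real.pi*x^2 + (4*Real.pi^2*x^2 - ω^2)/(4*(Real.pi*A)) : ℝ) : ℂ)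
          + ((ω*x - (4*Real.pi*x*ω)/(4*(Real.pi*A)) : ℝ) : ℂ) * I := by
      have hπA : (Real.pi * A : ℝ) ≠ 0 := by positivity
      push_cast
      field_simp
      ring_nf
      simp [Complex.I_sq]
      ring
    rw [hw]
    simp only [Complex.add_re, Complex.ofReal_re, Complex.mul_re, Complex.ofReal_im,
      Complex.I_re, Complex.I_im]
    ring
  clear_value A
  have hnorm : ∀ w : ℂ, ‖cexp w‖ = Real.exp w.re := fun w => by
    rw [Complex.norm_exp]
  rw [hnorm, hre]
  have hre_le : -Real.pi*x^2 + (4*Real.pi^2*x^2 - ω^2)/(4*(Real.pi*A))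
      ≤ -(Real.pi/2) * x^2 + -(τ^2/(8*Real.pi)) * ω^2 := by
    have hkey : (4*Real.pi^2*x^2 - ω^2)/(4*(Real.pi*A))
        ≤ (Real.pi/2)*x^2 - (τ^2/(8*Real.pi))*ω^2 := by
      rw [div_le_iff₀ (by positivity)]
      have e1 : ((Real.pi/2)*x^2 - (τ^2/(8*Real.pi))*ω^2) * (4*(Real.pi*A))
          = 2*Real.pi^2*x^2*A - (A*τ^2)/2*ω^2 := by
        field_simp; ring
      rw [e1]
      have h6 : 4*Real.pi^2*x^2 ≤ 2*Real.pi^2*x^2*A := by nlinarith [sq_nonneg (Real.pi*x)]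
      have h7 : (A*τ^2)/2*ω^2 ≤ ω^2 := by nlinarith [sq_nonneg ω]
      linarith
    linarith
  calc ‖((Real.pi : ℂ) / -(((-(Real.pi * A) : ℝ) : ℂ))) ^ (1/2 : ℂ)‖
        * Real.exp (-Real.pi*x^2 + (4*Real.pi^2*x^2 - ω^2)/(4*(Real.pi*A)))
      ≤ τ * Real.exp (-(Real.pi/2) * x^2 + -(τ^2/(8*Real.pi)) * ω^2) := by
        apply mul_le_mul hfact1 (Real.exp_le_exp.mpr hre_le) (Real.exp_pos _).le hτ0.le
    _ = τ * Real.exp (-(Real.pi/2) * x^2) * Real.exp (-(τ^2/(8*Real.pi)) * ω^2) := by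
        rw [Real.exp_add]; ring

lemma stft_eq (d : ℕ) (τ : ℝ) (z : (Fin d → ℝ) × (Fin d → ℝ)) :
    stft (gaussWin d) (fun x => gaussWin d (τ⁻¹ • x)) z
      = ∏ i, ∫ t : ℝ, cexp (((-(Real.pi * (τ⁻¹^2+1)) : ℝ) : ℂ) * t^2
          + (((2*Real.pi*(z.1 i) : ℝ) : ℂ) - I*((z.2 i :ℝ):ℂ)) * t
          + (I*((z.2 i :ℝ):ℂ)*((z.1 i :ℝ):ℂ) - (Real.pi:ℂ)*((z.1 i :ℝ):ℂ)^2)) := by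
  rw [stft]
  have hpt : ∀ y : Fin d → ℝ, gaussWin d (τ⁻¹ • y) * (starRingEnd ℂ) (tfshift z (gaussWin d) y)
      = ∏ i, cexp (((-(Real.pi * (τ⁻¹^2+1)) : ℝ) : ℂ) * (y i)^2
          + (((2*Real.pi*(z.1 i) : ℝ) : ℂ) - I*((z.2 i :ℝ):ℂ)) * (y i)
          + (I*((z.2 i :ℝ):ℂ)*((z.1 i :ℝ):ℂ) - (Real.pi:ℂ)*((z.1 i :ℝ):ℂ)^2)) := by
    intro y
    unfold gaussWin tfshift
    simp only [map_mul, ← Complex.exp_conj, map_neg, map_add, Complex.conj_I,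
      Complex.conj_ofReal, Pi.smul_apply, Pi.sub_apply, smul_eq_mul]
    rw [← Complex.exp_add, ← Complex.exp_add, ← Complex.exp_sum]
    congr 1
    push_cast
    rw [Finset.mul_sum, Finset.mul_sum, Finset.mul_sum, ← Finset.sum_add_distrib,
      ← Finset.sum_add_distrib]
    apply Finset.sum_congr rfl
    intro i _
    ring
  simp_rw [hpt]
  exact MeasureTheory.integral_fintype_prod_eq_prod (ι := Fin d)
    (fun i (t : ℝ) => cexp (((-(Real.pi * (τ⁻¹^2+1)) : ℝ) : ℂ) * (t:ℂ)^2
          + (((2*Real.pi*(z.1 i) : ℝ) : ℂ) - I*((z.2 i :ℝ):ℂ)) * (t:ℂ)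
          + (I*((z.2 i :ℝ):ℂ)*((z.1 i :ℝ):ℂ) - (Real.pi:ℂ)*((z.1 i :ℝ):ℂ)^2)))

lemma intAbs {b : ℝ} (hb : 0 < b) {M : ℝ} (hM : 0 ≤ M) :
    Integrable (fun t : ℝ => |t|^M * Real.exp (-b*t^2)) := by
  have h0 : IntegrableOn (fun t : ℝ => |t|^M * Real.exp (-b*t^2)) (Ioi 0) := by
    apply (integrableOn_rpow_mul_exp_neg_mul_sq hb (by linarith : (-1:ℝ) < M)).congr_fun
      ?_ measurableSet_Ioi
    intro x hx
    rw [mem_Ioi] at hx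
    simp only
    rw [abs_of_pos hx]
  have h1 : IntegrableOn (fun t : ℝ => |t|^M * Real.exp (-b*t^2)) (Iio 0) := by
    rw [← (Measure.measurePreserving_neg (volume : Measure ℝ)).integrableOn_comp_preimage
        (Homeomorph.neg ℝ).measurableEmbedding]
    simp only [Function.comp_def, abs_neg, neg_sq, neg_preimage, neg_Iio, neg_zero]
    exact h0
  rw [← integrableOn_univ, ← Iio_union_Ici (a := (0:ℝ)), integrableOn_union,
    integrableOn_Ici_iff_integrableOn_Ioi]
  exact ⟨h1, h0⟩

lemma intAux {b : ℝ} (hb : 0 < b) {M : ℝ} (hM : 0 ≤ M) :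
    Integrable (fun t : ℝ => (1+|t|)^M * Real.exp (-b*t^2)) := by
  have hcont : Continuous fun t : ℝ => (1+|t|)^M * Real.exp (-b*t^2) := by
    apply Continuous.mul
    · exact Continuous.rpow_const (by continuity) (fun x => Or.inr hM)
    · continuity
  apply Integrable.mono'
    (g := fun t => 2^M * Real.exp (-b*t^2) + 2^M * (|t|^M * Real.exp (-b*t^2)))
  · exact ((integrable_exp_neg_mul_sq hb).const_mul _).add ((intAbs hb hM).const_mul _)
  · exact hcont.aestronglyMeasurable
  · filter_upwards with t
    rw [Real.norm_eq_abs, _root_.abs_of_nonneg (show (0:ℝ) ≤ (1+|t|)^M * Real.exp (-b*t^2) by positivity)]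
    have h1 : (1+|t|) ≤ 2 * max 1 |t| := by
      rcases le_total |t| 1 with h|h
      · rw [max_eq_left h]; linarith
      · rw [max_eq_right h]; linarith [abs_nonneg t]
    have h2 : (1+|t|)^M ≤ (2 * max 1 |t|)^M :=
      Real.rpow_le_rpow (by positivity) h1 hM
    have h3 : (2 * max 1 |t|)^M = 2^M * (max 1 |t|)^M :=
      Real.mul_rpow (by norm_num) (by positivity)
    have h4 : (max 1 |t|)^M ≤ 1 + |t|^M := by
      rcases le_total |t| 1 with h|h
      · rw [max_eq_left h, Real.one_rpow]
        have := Real.rpow_nonneg (abs_nonneg t) M; linarith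
      · rw [max_eq_right h]
        have : (1:ℝ) ≤ |t|^M := Real.one_le_rpow h hM; linarith
    have h5 : (1+|t|)^M ≤ 2^M * (1 + |t|^M) := by
      calc (1+|t|)^M ≤ 2^M * (max 1 |t|)^M := h3 ▸ h2
        _ ≤ 2^M * (1 + |t|^M) := mul_le_mul_of_nonneg_left h4 (by positivity)
    calc (1+|t|)^M * Real.exp (-b*t^2) ≤ (2^M * (1 + |t|^M)) * Real.exp (-b*t^2) :=
        mul_le_mul_of_nonneg_right h5 (Real.exp_pos _).le
      _ = 2^M * Real.exp (-b*t^2) + 2^M * (|t|^M * Real.exp (-b*t^2)) := by ring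

lemma one_add_sum_le_prod {ι : Type*} (s : Finset ι) (f : ι → ℝ) (hf : ∀ i, 0 ≤ f i) :
    1 + ∑ i ∈ s, f i ≤ ∏ i ∈ s, (1 + f i) := by
  induction s using Finset.cons_induction with
  | empty => simp
  | cons a s ha ih =>
    rw [Finset.sum_cons, Finset.prod_cons]
    have hs : 0 ≤ ∑ i ∈ s, f i := Finset.sum_nonneg fun i _ => hf i
    nlinarith [hf a, mul_le_mul_of_nonneg_left ih (hf a)]

lemma core (d : ℕ) (v : ((Fin d → ℝ) × (Fin d → ℝ)) → ℝ) (hv0 : ∀ z, 0 ≤ v z)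
    (Cp N : ℝ) (hCp : 0 < Cp) (hv : ∀ z, v z ≤ Cp * (1+‖z‖)^N) :
    ∃ C > 0, ∀ τ : ℝ, 0 < τ → τ ≤ 1 →
      (∫ z : (Fin d → ℝ) × (Fin d → ℝ),
        v (τ • z) * ‖stft (gaussWin d) (fun x => gaussWin d (τ⁻¹ • x)) z‖) ≤ C := by
  have hπ := Real.pi_pos
  set M := max N 0 with hMdef
  have hM0 : 0 ≤ M := le_max_right _ _
  set f : ℝ → ℝ := fun t => (1+|t|)^M * Real.exp (-(Real.pi/2)*t^2) with hfdef
  set g0 : ℝ → ℝ := fun t => (1+|t|)^M * Real.exp (-(8*Real.pi)⁻¹*t^2) with hg0def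
  have hf_int : Integrable f := intAux (by positivity) hM0
  have hg0_int : Integrable g0 := intAux (by positivity) hM0
  have hf_pos : 0 < ∫ t, f t := by
    have h1 : 0 < ∫ t : ℝ, Real.exp (-(Real.pi/2)*t^2) := by
      rw [integral_gaussian]
      positivity
    refine lt_of_lt_of_le h1 (integral_mono (integrable_exp_neg_mul_sq (by positivity)) hf_int ?_)
    intro t
    simp only [hfdef]
    exact le_mul_of_one_le_left (Real.exp_pos _).le
      (Real.one_le_rpow (by linarith [abs_nonneg t]) hM0)
  have hg0_pos : 0 < ∫ t, g0 t := by
    have h1 : 0 < ∫ t : ℝ, Real.exp (-(8*Real.pi)⁻¹*t^2) := by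
      rw [integral_gaussian]
      positivity
    refine lt_of_lt_of_le h1 (integral_mono (integrable_exp_neg_mul_sq (by positivity)) hg0_int ?_)
    intro t
    simp only [hg0def]
    exact le_mul_of_one_le_left (Real.exp_pos _).le
      (Real.one_le_rpow (by linarith [abs_nonneg t]) hM0)
  refine ⟨Cp * (∫ t, f t)^d * (∫ t, g0 t)^d, by positivity, ?_⟩
  intro τ hτ0 hτ1
  set gτ : ℝ → ℝ := fun t => τ * g0 (τ * t) with hgτdef
  have hgτ_int : Integrable gτ := (hg0_int.comp_mul_left' hτ0.ne').const_mul τ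
  have hgτ_val : ∫ t, gτ t = ∫ t, g0 t := by
    rw [hgτdef]
    rw [MeasureTheory.integral_const_mul, Measure.integral_comp_mul_left g0 τ, smul_eq_mul,
      abs_of_pos (inv_pos.mpr hτ0)]
    field_simp
  have hgτ_eq : ∀ s : ℝ, gτ s
      = τ * ((1+τ*|s|)^M * Real.exp (-(τ^2/(8*Real.pi))*s^2)) := by
    intro s
    rw [hgτdef]
    simp only [hg0def]
    rw [abs_mul, abs_of_pos hτ0]
    have : -(8*Real.pi)⁻¹*(τ*s)^2 = -(τ^2/(8*Real.pi))*s^2 := by ring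
    rw [this]
  set G : ((Fin d → ℝ) × (Fin d → ℝ)) → ℝ :=
    fun z => (Cp * ∏ i, f (z.1 i)) * ∏ i, gτ (z.2 i) with hGdef
  have hG_int : Integrable G := by
    rw [hGdef, Measure.volume_eq_prod]
    exact ((Integrable.fintype_prod (fun i => hf_int)).const_mul Cp).mul_prod
      (Integrable.fintype_prod (fun i => hgτ_int))
  have hpoint : ∀ z : (Fin d → ℝ) × (Fin d → ℝ),
      v (τ • z) * ‖stft (gaussWin d) (fun x => gaussWin d (τ⁻¹ • x)) z‖ ≤ G z := by
    intro z
    have hstft : ‖stft (gaussWin d) (fun x => gaussWin d (τ⁻¹ • x)) z‖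
        ≤ ∏ i, (τ * Real.exp (-(Real.pi/2) * (z.1 i)^2)
            * Real.exp (-(τ^2/(8*Real.pi)) * (z.2 i)^2)) := by
      rw [stft_eq d τ z, norm_prod]
      exact Finset.prod_le_prod (fun i _ => norm_nonneg _)
        (fun i _ => oneDim τ (z.1 i) (z.2 i) hτ0 hτ1)
    have hnz : ‖z.1‖ ≤ ∑ i, |z.1 i| := by
      refine (pi_norm_le_iff_of_nonneg (Finset.sum_nonneg fun i _ => abs_nonneg _)).mpr fun i => ?_
      rw [Real.norm_eq_abs]
      exact Finset.single_le_sum (f := fun j => |z.1 j|) (fun j _ => abs_nonneg _) (Finset.mem_univ i)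
    have hnω : ‖z.2‖ ≤ ∑ i, |z.2 i| := by
      refine (pi_norm_le_iff_of_nonneg (Finset.sum_nonneg fun i _ => abs_nonneg _)).mpr fun i => ?_
      rw [Real.norm_eq_abs]
      exact Finset.single_le_sum (f := fun j => |z.2 j|) (fun j _ => abs_nonneg _) (Finset.mem_univ i)
    have h3 : 1+‖τ • z‖ ≤ (∏ i, (1+|z.1 i|)) * (∏ i, (1+τ*|z.2 i|)) := by
      have hτz : ‖τ • z‖ ≤ (∑ i, |z.1 i|) + ∑ i, τ*|z.2 i| := by
        have e1 : ‖τ • z‖ = max ‖τ • z.1‖ ‖τ • z.2‖ := rfl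
        rw [e1]
        have e2 : ‖τ • z.1‖ = τ * ‖z.1‖ := by
          rw [norm_smul, Real.norm_eq_abs, abs_of_pos hτ0]
        have e3 : ‖τ • z.2‖ = τ * ‖z.2‖ := by
          rw [norm_smul, Real.norm_eq_abs, abs_of_pos hτ0]
        have hb1 : ‖τ • z.1‖ ≤ ∑ i, |z.1 i| := by
          rw [e2]
          calc τ * ‖z.1‖ ≤ 1 * ‖z.1‖ := by
                apply mul_le_mul_of_nonneg_right hτ1 (norm_nonneg _)
            _ = ‖z.1‖ := one_mul _
            _ ≤ _ := hnz
        have hb2 : ‖τ • z.2‖ ≤ ∑ i, τ*|z.2 i| := by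
          rw [e3, ← Finset.mul_sum]
          exact mul_le_mul_of_nonneg_left hnω hτ0.le
        apply max_le
        · exact le_add_of_le_of_nonneg hb1 (Finset.sum_nonneg fun i _ => by positivity)
        · exact le_add_of_nonneg_of_le (Finset.sum_nonneg fun i _ => abs_nonneg _) hb2
      have hs1 : 1 + ∑ i, |z.1 i| ≤ ∏ i, (1+|z.1 i|) :=
        one_add_sum_le_prod _ _ (fun i => abs_nonneg _)
      have hs2 : 1 + ∑ i, τ*|z.2 i| ≤ ∏ i, (1+τ*|z.2 i|) :=
        one_add_sum_le_prod _ _ (fun i => by positivity)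
      have hA : 0 ≤ ∑ i, |z.1 i| := Finset.sum_nonneg fun i _ => abs_nonneg _
      have hB : 0 ≤ ∑ i, τ*|z.2 i| := Finset.sum_nonneg fun i _ => by positivity
      calc 1+‖τ • z‖ ≤ 1 + ((∑ i, |z.1 i|) + ∑ i, τ*|z.2 i|) := by linarith
        _ ≤ (1 + ∑ i, |z.1 i|) * (1 + ∑ i, τ*|z.2 i|) := by nlinarith
        _ ≤ (∏ i, (1+|z.1 i|)) * (∏ i, (1+τ*|z.2 i|)) := by
            apply mul_le_mul hs1 hs2 (by linarith) (le_trans (by linarith) hs1)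
    have h4 : (1+‖τ • z‖)^M ≤ (∏ i, (1+|z.1 i|)^M) * (∏ i, (1+τ*|z.2 i|)^M) := by
      calc (1+‖τ • z‖)^M ≤ ((∏ i, (1+|z.1 i|)) * (∏ i, (1+τ*|z.2 i|)))^M :=
            Real.rpow_le_rpow (by positivity) h3 hM0
        _ = (∏ i, (1+|z.1 i|))^M * (∏ i, (1+τ*|z.2 i|))^M :=
            Real.mul_rpow (Finset.prod_nonneg fun i _ => by positivity)
              (Finset.prod_nonneg fun i _ => by positivity)
        _ = (∏ i, (1+|z.1 i|)^M) * (∏ i, (1+τ*|z.2 i|)^M) := by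
            rw [Real.finset_prod_rpow _ _ (fun i _ => by positivity) M,
              Real.finset_prod_rpow _ _ (fun i _ => by positivity) M]
    have hw : v (τ • z) ≤ Cp * (∏ i, (1+|z.1 i|)^M) * ∏ i, (1+τ*|z.2 i|)^M := by
      calc v (τ • z) ≤ Cp * (1+‖τ • z‖)^N := hv _
        _ ≤ Cp * (1+‖τ • z‖)^M := by
            apply mul_le_mul_of_nonneg_left _ hCp.le
            exact Real.rpow_le_rpow_of_exponent_le (by linarith [norm_nonneg (τ • z)])
              (le_max_left N 0)
        _ ≤ Cp * ((∏ i, (1+|z.1 i|)^M) * (∏ i, (1+τ*|z.2 i|)^M)) :=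
            mul_le_mul_of_nonneg_left h4 hCp.le
        _ = Cp * (∏ i, (1+|z.1 i|)^M) * ∏ i, (1+τ*|z.2 i|)^M := by ring
    calc v (τ • z) * ‖stft (gaussWin d) (fun x => gaussWin d (τ⁻¹ • x)) z‖
        ≤ (Cp * (∏ i, (1+|z.1 i|)^M) * ∏ i, (1+τ*|z.2 i|)^M)
          * ∏ i, (τ * Real.exp (-(Real.pi/2) * (z.1 i)^2)
              * Real.exp (-(τ^2/(8*Real.pi)) * (z.2 i)^2)) := by
          apply mul_le_mul hw hstft (norm_nonneg _)
          have : 0 ≤ ∏ i, (1+τ*|z.2 i|)^M := Finset.prod_nonneg fun i _ => by positivity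
          have h0 : 0 ≤ ∏ i, (1+|z.1 i|)^M := Finset.prod_nonneg fun i _ => by positivity
          positivity
      _ = G z := by
          rw [hGdef]
          simp only [hfdef]
          simp_rw [hgτ_eq]
          simp_rw [Finset.prod_mul_distrib]
          ring
  have h_nonneg : ∀ z : (Fin d → ℝ) × (Fin d → ℝ),
      0 ≤ v (τ • z) * ‖stft (gaussWin d) (fun x => gaussWin d (τ⁻¹ • x)) z‖ :=
    fun z => mul_nonneg (hv0 _) (norm_nonneg _)
  have hGint_eq : ∫ z : (Fin d → ℝ) × (Fin d → ℝ), G z = Cp * (∫ t, f t)^d * (∫ t, g0 t)^d := by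
    rw [hGdef, Measure.volume_eq_prod]
    beta_reduce
    refine (MeasureTheory.integral_prod_mul (f := fun x : Fin d → ℝ => Cp * ∏ i, f (x i))
      (g := fun w : Fin d → ℝ => ∏ i, gτ (w i))).trans ?_
    rw [MeasureTheory.integral_const_mul,
      MeasureTheory.integral_fintype_prod_volume_eq_pow (ι := Fin d) f,
      MeasureTheory.integral_fintype_prod_volume_eq_pow (ι := Fin d) gτ, hgτ_val, Fintype.card_fin]
  calc (∫ z : (Fin d → ℝ) × (Fin d → ℝ),
        v (τ • z) * ‖stft (gaussWin d) (fun x => gaussWin d (τ⁻¹ • x)) z‖)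
      ≤ ∫ z, G z := integral_mono_of_nonneg (Filter.Eventually.of_forall h_nonneg) hG_int
        (Filter.Eventually.of_forall hpoint)
    _ = Cp * (∫ t, f t)^d * (∫ t, g0 t)^d := hGint_eq

end Aux

/-- Uniform `L¹` bounds for the STFT of dilated Gaussians `g_τ = g(·/τ)`,
`0 < τ ≤ 1`, both unweighted and with the weight `v(τ·)` for any
submultiplicative even weight `v` of polynomial growth. -/
theorem stft_dilated_gaussian_L1_bound (d : ℕ) :
    (∃ C > 0, ∀ τ : ℝ, 0 < τ → τ ≤ 1 →
      (∫ z : (Fin d → ℝ) × (Fin d → ℝ),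
        ‖stft (gaussWin d) (fun x => gaussWin d (τ⁻¹ • x)) z‖) ≤ C) ∧
    (∀ v : ((Fin d → ℝ) × (Fin d → ℝ)) → ℝ,
      (∀ z, 0 < v z) → Continuous v → (∀ z, v (-z) = v z) →
      (∃ Cs > 0, ∀ z w, v (z + w) ≤ Cs * v z * v w) →
      (∃ Cp > 0, ∃ N : ℝ, ∀ z, v z ≤ Cp * (1 + ‖z‖) ^ N) →
      ∃ C > 0, ∀ τ : ℝ, 0 < τ → τ ≤ 1 →
        (∫ z : (Fin d → ℝ) × (Fin d → ℝ),
          v (τ • z) * ‖stft (gaussWin d) (fun x => gaussWin d (τ⁻¹ • x)) z‖) ≤ C) := by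
  constructor
  · obtain ⟨C, hC, h⟩ := core d (fun _ => 1) (fun _ => zero_le_one) 1 0 one_pos
      (fun z => by rw [Real.rpow_zero]; norm_num)
    exact ⟨C, hC, fun τ hτ0 hτ1 => by simpa using h τ hτ0 hτ1⟩
  · rintro v hv0 _ _ _ ⟨Cp, hCp, N, hN⟩
    exact core d v (fun z => (hv0 z).le) Cp N hCp hN
end
end

section
/- The Schrödinger propagator e^{itΔ} is not strongly continuous at t=0 on M^∞(R^d): with initial datum u_0 = δ (the Dirac delta), the solution u(t) = F^{−1}(e^{it|·|^2}) (up to normalization) satisfies ‖u(t) − δ‖_{M^∞} ≥ c > 0 for all t ≠ 0, i.e. ‖u(t) − u_0‖_{M^∞} does not tend to 0 as t → 0. -/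
open MeasureTheory Complex SchwartzMap
open scoped RealInnerProductSpace ENNReal

noncomputable section

private lemma aux_finv_window (d : ℕ) (ξ x : EuclideanSpace ℝ (Fin d)) :
    FourierTransformInv.fourierInv (fun y => Complex.exp (-Complex.I * ((⟪ξ, y⟫ : ℝ) : ℂ)) *
      Complex.exp (-(Real.pi : ℂ) * ((‖y‖ ^ 2 : ℝ) : ℂ))) x
    = Complex.exp (-((‖(2 * Real.pi) • x - ξ‖ ^ 2 : ℝ) : ℂ) / (4 * Real.pi)) := by
  rw [Real.fourierInv_eq']
  have h1 : ∀ v : EuclideanSpace ℝ (Fin d),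
      Complex.exp ((↑(2 * Real.pi * ⟪v, x⟫) * Complex.I)) •
        (Complex.exp (-Complex.I * ((⟪ξ, v⟫ : ℝ) : ℂ)) *
          Complex.exp (-(Real.pi : ℂ) * ((‖v‖ ^ 2 : ℝ) : ℂ)))
      = Complex.exp (-(Real.pi:ℂ) * ‖v‖^2 + Complex.I * ⟪(2 * Real.pi) • x - ξ, v⟫) := by
    intro v
    rw [smul_eq_mul, ← Complex.exp_add, ← Complex.exp_add]
    congr 1
    have : ⟪(2 * Real.pi) • x - ξ, v⟫ = 2 * Real.pi * ⟪v, x⟫ - ⟪ξ, v⟫ := by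
      rw [inner_sub_left, real_inner_smul_left, real_inner_comm v x]
    rw [this]
    push_cast
    ring
  simp_rw [h1]
  rw [GaussianFourier.integral_cexp_neg_mul_sq_norm_add (by simpa using Real.pi_pos) Complex.I
    ((2 * Real.pi) • x - ξ)]
  have : ((Real.pi : ℂ) / Real.pi) = 1 := by
    rw [div_self]; exact_mod_cast Real.pi_ne_zero
  rw [this, one_cpow, one_mul, Complex.I_sq]
  push_cast
  ring_nf

private lemma aux_gauss_int (d : ℕ) (t : ℝ) (ξ : EuclideanSpace ℝ (Fin d)) :
    (∫ x : EuclideanSpace ℝ (Fin d),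
      Complex.exp (Complex.I * (t : ℂ) * ((‖x‖ ^ 2 : ℝ) : ℂ)) *
        Complex.exp (-((‖(2 * Real.pi) • x - ξ‖ ^ 2 : ℝ) : ℂ) / (4 * Real.pi)))
    = ((Real.pi : ℂ) / ((Real.pi : ℂ) - Complex.I * t)) ^ ((d : ℂ) / 2) *
        Complex.exp ((‖ξ‖:ℂ)^2 / (4 * ((Real.pi : ℂ) - Complex.I * t))) *
        Complex.exp (-(‖ξ‖:ℂ)^2 / (4 * Real.pi)) := by
  have hπ : (Real.pi : ℂ) ≠ 0 := by exact_mod_cast Real.pi_ne_zero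
  have h1 : ∀ x : EuclideanSpace ℝ (Fin d),
      Complex.exp (Complex.I * (t : ℂ) * ((‖x‖ ^ 2 : ℝ) : ℂ)) *
        Complex.exp (-((‖(2 * Real.pi) • x - ξ‖ ^ 2 : ℝ) : ℂ) / (4 * Real.pi))
      = Complex.exp (-((Real.pi : ℂ) - Complex.I * t) * ‖x‖^2 + 1 * ⟪ξ, x⟫) *
          Complex.exp (-(‖ξ‖:ℂ)^2 / (4 * Real.pi)) := by
    intro x
    rw [← Complex.exp_add, ← Complex.exp_add]
    congr 1
    have hn : ‖(2 * Real.pi) • x - ξ‖^2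
        = (2*Real.pi)^2 * ‖x‖^2 - 2 * (2*Real.pi) * ⟪ξ, x⟫ + ‖ξ‖^2 := by
      rw [norm_sub_sq_real, norm_smul, real_inner_smul_left]
      have : ‖(2 * Real.pi : ℝ)‖ = 2 * Real.pi := by
        rw [Real.norm_eq_abs, abs_of_pos (by positivity)]
      rw [this, real_inner_comm x ξ]
      ring
    rw [hn]
    push_cast
    field_simp
    ring
  simp_rw [h1]
  rw [integral_mul_const, GaussianFourier.integral_cexp_neg_mul_sq_norm_add
    (by simpa using Real.pi_pos) 1 ξ]
  have : (Module.finrank ℝ (EuclideanSpace ℝ (Fin d)) / 2 : ℂ) = ((d:ℂ)/2) := by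
    simp
  rw [this]
  ring_nf

private lemma aux_abs_bound (d : ℕ) (t a : ℝ) :
    ‖(((Real.pi : ℂ) / ((Real.pi : ℂ) - Complex.I * t)) ^ ((d : ℂ) / 2) *
        Complex.exp ((a:ℂ) / (4 * ((Real.pi : ℂ) - Complex.I * t))) *
        Complex.exp (-(a:ℂ) / (4 * Real.pi)))‖
    ≤ Real.exp (-(a * t^2) / (4 * Real.pi * (Real.pi^2 + t^2))) := by
  have hπ : (0:ℝ) < Real.pi := Real.pi_pos
  have hw : ((Real.pi : ℂ) - Complex.I * t) ≠ 0 := by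
    intro h
    have := congrArg Complex.re h
    simp at this
  rw [mul_assoc, ← Complex.exp_add, norm_mul, Complex.norm_exp]
  have hc : ((d : ℂ)/2) = (((d:ℝ)/2 : ℝ) : ℂ) := by push_cast; ring
  have h1 : ‖(((Real.pi : ℂ) / ((Real.pi : ℂ) - Complex.I * t)) ^ ((d : ℂ) / 2))‖ ≤ 1 := by
    rw [hc, Complex.norm_cpow_real]
    apply Real.rpow_le_one (by positivity)
    · rw [norm_div, div_le_one (norm_pos_iff.mpr hw)]
      rw [Complex.norm_real, Real.norm_eq_abs, abs_of_pos hπ, Complex.norm_def, Complex.normSq_apply]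
      rw [show ((Real.pi : ℂ) - Complex.I * t).re = Real.pi by simp,
        show ((Real.pi : ℂ) - Complex.I * t).im = -t by simp]
      rw [show Real.pi*Real.pi + -t*-t = Real.pi^2 + t^2 by ring]
      calc Real.pi = Real.sqrt (Real.pi^2) := (Real.sqrt_sq hπ.le).symm
        _ ≤ _ := Real.sqrt_le_sqrt (by nlinarith)
    · positivity
  have h2 : ((a:ℂ) / (4 * ((Real.pi : ℂ) - Complex.I * t)) + -(a:ℂ) / (4 * Real.pi)).re
      = -(a * t^2) / (4 * Real.pi * (Real.pi^2 + t^2)) := by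
    have hq : ((a:ℂ) / (4 * ((Real.pi : ℂ) - Complex.I * t)) + -(a:ℂ) / (4 * Real.pi))
        = ((-(a * t^2) / (4 * Real.pi * (Real.pi^2 + t^2)) : ℝ) : ℂ)
          + Complex.I * ((a * t / (4 * (Real.pi^2 + t^2)) : ℝ) : ℂ) := by
      have hd2 : ((Real.pi:ℂ)^2 + (t:ℂ)^2) ≠ 0 := by
        have : ((Real.pi:ℂ)^2 + (t:ℂ)^2) = (((Real.pi^2 + t^2 : ℝ)) : ℂ) := by push_cast; ring
        rw [this]
        exact_mod_cast (by positivity : (Real.pi^2 + t^2 : ℝ) ≠ 0)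
      have hπc : (Real.pi : ℂ) ≠ 0 := by exact_mod_cast Real.pi_ne_zero
      push_cast
      field_simp
      ring_nf
      simp only [Complex.I_sq]
      ring
    rw [hq]
    simp only [Complex.add_re, Complex.ofReal_re, Complex.mul_re, Complex.I_re,
      Complex.I_im, Complex.ofReal_im]
    ring
  rw [h2]
  calc _ ≤ 1 * Real.exp (-(a * t ^ 2) / (4 * Real.pi * (Real.pi ^ 2 + t ^ 2))) :=
        mul_le_mul_of_nonneg_right h1 (Real.exp_nonneg _)
    _ = _ := one_mul _

/-- The Schrödinger propagator is not strongly continuous at `t = 0` on `M^∞(ℝ^d)`: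
for the initial datum `u₀ = δ`, the solution `u(t) = 𝓕⁻¹(e^{it|·|²})` (defined as a tempered
distribution by `⟨u(t), φ⟩ = ⟨e^{it|·|²}, 𝓕⁻¹φ⟩`) satisfies `‖u(t) - δ‖_{M^∞} ≥ c > 0`
for all `t ≠ 0`, where the `M^∞` norm is `sup_z |⟨w, π(z)g⟩|` for the Gaussian window `g`,
the pairing being conjugate-linear in the second factor
(`W z = conj(π(z)g)`, `π(x,ω)g(y) = e^{iω·(y-x)} g(y-x)`, `g(y)=e^{-π|y|²}`). -/
theorem schrodinger_not_strongly_continuous_Minfty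
    (d : ℕ) (hd : 0 < d)
    (u : ℝ → (𝓢(EuclideanSpace ℝ (Fin d), ℂ) →L[ℂ] ℂ))
    (hu : ∀ (t : ℝ) (φ : 𝓢(EuclideanSpace ℝ (Fin d), ℂ)),
      u t φ = ∫ x : EuclideanSpace ℝ (Fin d),
        Complex.exp (Complex.I * (t : ℂ) * ((‖x‖ ^ 2 : ℝ) : ℂ)) *
          ((FourierTransform.fourierCLE ℂ 𝓢(EuclideanSpace ℝ (Fin d), ℂ)).symm φ) x)
    (W : (EuclideanSpace ℝ (Fin d) × EuclideanSpace ℝ (Fin d)) →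
      𝓢(EuclideanSpace ℝ (Fin d), ℂ))
    (hW : ∀ z y, W z y =
      Complex.exp (-Complex.I * ((⟪z.2, y - z.1⟫ : ℝ) : ℂ)) *
        Complex.exp (-(Real.pi : ℂ) * ((‖y - z.1‖ ^ 2 : ℝ) : ℂ))) :
    ∃ c : ℝ≥0∞, 0 < c ∧ ∀ t : ℝ, t ≠ 0 →
      c ≤ ⨆ z : EuclideanSpace ℝ (Fin d) × EuclideanSpace ℝ (Fin d),
        (‖(u t - (BoundedContinuousFunction.evalCLM ℂ (0 : EuclideanSpace ℝ (Fin d))).comp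
            (SchwartzMap.toBoundedContinuousFunctionCLM ℂ (EuclideanSpace ℝ (Fin d)) ℂ)) (W z)‖₊ : ℝ≥0∞) := by
  refine ⟨ENNReal.ofReal (1/2), ENNReal.ofReal_pos.mpr (by norm_num), fun t ht => ?_⟩
  have hπ : (0:ℝ) < Real.pi := Real.pi_pos
  -- choose ξ with the right norm
  set r : ℝ := Real.sqrt (Real.log 2 * (4 * Real.pi * (Real.pi^2 + t^2)) / t^2) with hr
  set ξ : EuclideanSpace ℝ (Fin d) :=
    r • EuclideanSpace.single (⟨0, hd⟩ : Fin d) (1:ℝ) with hξdef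
  have hξnorm : ‖ξ‖^2 = Real.log 2 * (4 * Real.pi * (Real.pi^2 + t^2)) / t^2 := by
    rw [hξdef, norm_smul, EuclideanSpace.norm_single, norm_one, mul_one, Real.norm_eq_abs,
      _root_.sq_abs, hr, Real.sq_sqrt]
    apply div_nonneg _ (by positivity)
    exact mul_nonneg (Real.log_nonneg one_le_two) (by positivity)
  set z : EuclideanSpace ℝ (Fin d) × EuclideanSpace ℝ (Fin d) :=
    ((0 : EuclideanSpace ℝ (Fin d)), ξ) with hz
  -- the window as a plain function
  have hWz : ∀ y, W z y = Complex.exp (-Complex.I * ((⟪ξ, y⟫ : ℝ) : ℂ)) *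
      Complex.exp (-(Real.pi : ℂ) * ((‖y‖ ^ 2 : ℝ) : ℂ)) := by
    intro y
    rw [hW]
    simp [hz]
  -- δ pairing
  have hδ : ((BoundedContinuousFunction.evalCLM ℂ (0 : EuclideanSpace ℝ (Fin d))).comp (SchwartzMap.toBoundedContinuousFunctionCLM ℂ (EuclideanSpace ℝ (Fin d)) ℂ)) (W z) = 1 := by
    change W z 0 = 1
    rw [hWz]
    simp
  -- u t pairing
  have hFinv : ∀ x, ((FourierTransform.fourierCLE ℂ 𝓢(EuclideanSpace ℝ (Fin d), ℂ)).symm (W z)) x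
      = Complex.exp (-((‖(2 * Real.pi) • x - ξ‖ ^ 2 : ℝ) : ℂ) / (4 * Real.pi)) := by
    intro x
    rw [SchwartzMap.fourierTransformCLE_symm_apply]
    rw [SchwartzMap.fourierInv_coe]
    rw [show ⇑(W z) = (fun y => Complex.exp (-Complex.I * ((⟪ξ, y⟫ : ℝ) : ℂ)) *
      Complex.exp (-(Real.pi : ℂ) * ((‖y‖ ^ 2 : ℝ) : ℂ))) from funext hWz]
    exact aux_finv_window d ξ x
  have hut : u t (W z) = ((Real.pi : ℂ) / ((Real.pi : ℂ) - Complex.I * t)) ^ ((d : ℂ) / 2) *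
        Complex.exp (((‖ξ‖^2 : ℝ):ℂ) / (4 * ((Real.pi : ℂ) - Complex.I * t))) *
        Complex.exp (-((‖ξ‖^2 : ℝ):ℂ) / (4 * Real.pi)) := by
    rw [hu]
    simp_rw [hFinv]
    rw [aux_gauss_int d t ξ]
    push_cast
    ring_nf
  -- modulus bound
  have habs : ‖u t (W z)‖ ≤ 1/2 := by
    rw [hut]
    refine le_trans (aux_abs_bound d t (‖ξ‖^2)) ?_
    have harg : -((‖ξ‖^2) * t^2) / (4 * Real.pi * (Real.pi^2 + t^2)) = -Real.log 2 := by
      rw [hξnorm]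
      field_simp
    rw [harg, Real.exp_neg, Real.exp_log (by norm_num)]
    norm_num
  -- conclude
  have hlow : (1/2 : ℝ) ≤
      ‖(u t - ((BoundedContinuousFunction.evalCLM ℂ (0 : EuclideanSpace ℝ (Fin d))).comp (SchwartzMap.toBoundedContinuousFunctionCLM ℂ (EuclideanSpace ℝ (Fin d)) ℂ))) (W z)‖ := by
    rw [ContinuousLinearMap.sub_apply, hδ]
    have h1 : ‖(1:ℂ)‖ - ‖u t (W z)‖ ≤ ‖u t (W z) - 1‖ := by
      rw [norm_sub_rev]
      exact norm_sub_norm_le _ _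
    have : ‖u t (W z)‖ = ‖u t (W z)‖ := rfl
    rw [norm_one] at h1
    linarith [habs, h1, this ▸ h1]
  calc ENNReal.ofReal (1/2)
      ≤ (‖(u t - ((BoundedContinuousFunction.evalCLM ℂ (0 : EuclideanSpace ℝ (Fin d))).comp (SchwartzMap.toBoundedContinuousFunctionCLM ℂ (EuclideanSpace ℝ (Fin d)) ℂ))) (W z)‖₊ : ℝ≥0∞) := by
        rw [← enorm_eq_nnnorm, ← ofReal_norm]
        exact ENNReal.ofReal_le_ofReal hlow
    _ ≤ _ := le_iSup (fun z => (‖(u t - ((BoundedContinuousFunction.evalCLM ℂ (0 : EuclideanSpace ℝ (Fin d))).comp (SchwartzMap.toBoundedContinuousFunctionCLM ℂ (EuclideanSpace ℝ (Fin d)) ℂ))) (W z)‖₊ : ℝ≥0∞)) z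
end
end
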